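/- Every subgroup G of B(Q_∞) satisfies G = π^{-1}(π(G)) ∩ π_d^{-1}(π_d(G)). -/
import Mathlib


def hermMul (q : ℕ) {F : Type} [Field F] (s t : F × F × F) : F × F × F :=
  (s.1 * t.1, t.1 * s.2.1 + t.2.1,
    t.1 ^ (q + 1) * s.2.2 + t.1 * t.2.1 ^ q * s.2.1 + t.2.2)

def hermSet (q : ℕ) (F : Type) [Field F] : Set (F × F × F) :=
  {s | s.1 ≠ 0 ∧ s.2.2 ^ q + s.2.2 = s.2.1 ^ (q + 1)}

def ggkMul (q : ℕ) {F E : Type} [Field F] [Field E] (s t : F × F × F × E) :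
    F × F × F × E :=
  (s.1 * t.1, t.1 * s.2.1 + t.2.1,
    t.1 ^ (q + 1) * s.2.2.1 + t.1 * t.2.1 ^ q * s.2.1 + t.2.2.1,
    s.2.2.2 * t.2.2.2)

def ggkSet (q m : ℕ) {F E : Type} [Field F] [Field E] (ι : F →+* E) :
    Set (F × F × F × E) :=
  {s | s.1 ≠ 0 ∧ s.2.2.1 ^ q + s.2.2.1 = s.2.1 ^ (q + 1) ∧ s.2.2.2 ^ m = ι s.1}

/-- restriction to the Hermitian coordinates: `(a,b,c,d) ↦ (a,b,c)`. -/
def projA {q m : ℕ} {F E : Type} [Field F] [Field E] {ι : F →+* E}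
    (x : ggkSet q m ι) : F × F × F :=
  (x.val.1, x.val.2.1, x.val.2.2.1)

/-- the map `π_d : (a,b,c,d) ↦ d`. -/
def projD {q m : ℕ} {F E : Type} [Field F] [Field E] {ι : F →+* E}
    (x : ggkSet q m ι) : E :=
  x.val.2.2.2

/-- the map `π_a : (a,b,c,d) ↦ a`. -/
def projA0 {q m : ℕ} {F E : Type} [Field F] [Field E] {ι : F →+* E}
    (x : ggkSet q m ι) : F :=
  x.val.1

section Aux

variable {q m : ℕ} {F E : Type} [Field F] [Field E] {ι : F →+* E}
  [Group (ggkSet q m ι)]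

lemma ggk_one_val (hmulB : ∀ s t : ggkSet q m ι, (s * t).val = ggkMul q s.val t.val)
    (hm : m ≠ 0) :
    ((1 : ggkSet q m ι) : F × F × F × E) = (1, 0, 0, 1) := by
  obtain ⟨ha, _, hd⟩ := (1 : ggkSet q m ι).2
  have h1 : ((1 : ggkSet q m ι) : F × F × F × E) =
      ggkMul q ((1 : ggkSet q m ι) : F × F × F × E) ((1 : ggkSet q m ι) : F × F × F × E) := by
    rw [← hmulB, mul_one]
  set u := ((1 : ggkSet q m ι) : F × F × F × E) with hu
  have e1 : u.1 = u.1 * u.1 := congrArg Prod.fst h1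
  have ha1 : u.1 = 1 :=
    mul_left_cancel₀ ha (show u.1 * u.1 = u.1 * 1 by rw [mul_one, ← e1])
  have e2 : u.2.1 = u.1 * u.2.1 + u.2.1 := congrArg (fun t => t.2.1) h1
  rw [ha1, one_mul] at e2
  have hb1 : u.2.1 = 0 := add_eq_left.mp e2.symm
  have e3 : u.2.2.1 = u.1 ^ (q+1) * u.2.2.1 + u.1 * u.2.1 ^ q * u.2.1 + u.2.2.1 :=
    congrArg (fun t => t.2.2.1) h1
  rw [ha1, hb1] at e3
  simp only [one_pow, one_mul, mul_zero, add_zero] at e3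
  have hc1 : u.2.2.1 = 0 := add_eq_left.mp e3.symm
  have e4 : u.2.2.2 = u.2.2.2 * u.2.2.2 := congrArg (fun t => t.2.2.2) h1
  have hdm : u.2.2.2 ^ m = 1 := by rw [hd, ha1, map_one]
  have hdne : u.2.2.2 ≠ 0 := by
    intro h0
    rw [h0, zero_pow hm] at hdm
    exact zero_ne_one hdm
  have hd1 : u.2.2.2 = 1 :=
    mul_left_cancel₀ hdne (show u.2.2.2 * u.2.2.2 = u.2.2.2 * 1 by rw [mul_one, ← e4])
  calc u = (u.1, u.2.1, u.2.2.1, u.2.2.2) := rfl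
    _ = (1, 0, 0, 1) := by rw [ha1, hb1, hc1, hd1]

lemma ggk_pow_val (hmulB : ∀ s t : ggkSet q m ι, (s * t).val = ggkMul q s.val t.val)
    (hm : m ≠ 0) (u : ggkSet q m ι) (B C : F) (e : E)
    (hu : (u : F × F × F × E) = (1, B, C, e)) (k : ℕ) :
    ((u ^ k : ggkSet q m ι) : F × F × F × E) =
      (1, (k : F) * B, (k : F) * C + (k.choose 2 : F) * B ^ (q + 1), e ^ k) := by
  induction k with
  | zero => simp [ggk_one_val hmulB hm]
  | succ k ih =>
    have hch : (k + 1).choose 2 = k.choose 2 + k := by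
      rw [Nat.choose_succ_succ, Nat.choose_one_right, Nat.add_comm]
    rw [pow_succ, hmulB, ih, hu]
    simp only [ggkMul, Prod.mk.injEq, hch]
    refine ⟨by ring, by push_cast; ring, by push_cast; ring, by ring⟩

end Aux
theorem stmt14 (p h q n m : ℕ) (hp : p.Prime) (hh : 0 < h) (hq : q = p ^ h)
    (hn : Odd n) (hn1 : 1 ≤ n) (hm : m * (q + 1) = q ^ n + 1)
    (F E : Type) [Field F] [Fintype F] [CharP F p] [Field E] [Fintype E] [CharP E p]
    (hF : Fintype.card F = q ^ 2) (hE : Fintype.card E = q ^ (2 * n)) (ι : F →+* E)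
    [instB : Group (ggkSet q m ι)]
    (hmulB : ∀ s t : ggkSet q m ι, (s * t).val = ggkMul q s.val t.val)
    (G : Subgroup ↥(ggkSet q m ι)) :
    (G : Set ↥(ggkSet q m ι)) =
      {x : ↥(ggkSet q m ι) |
        projA x ∈ projA '' (G : Set ↥(ggkSet q m ι)) ∧
        projD x ∈ projD '' (G : Set ↥(ggkSet q m ι))} := by
  have hm0 : m ≠ 0 := by
    rintro rfl
    rw [zero_mul] at hm
    exact Nat.succ_ne_zero _ hm.symm
  ext x
  simp only [Set.mem_setOf_eq, Set.mem_image, SetLike.mem_coe]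
  constructor
  · intro hx
    exact ⟨⟨x, hx, rfl⟩, ⟨x, hx, rfl⟩⟩
  · rintro ⟨⟨g, hg, hA⟩, ⟨g', hg', hD⟩⟩
    have hxa : x.val.1 = g.val.1 := (congrArg (fun t => t.1) hA).symm
    have hxb : x.val.2.1 = g.val.2.1 := (congrArg (fun t => t.2.1) hA).symm
    have hxc : x.val.2.2.1 = g.val.2.2.1 := (congrArg (fun t => t.2.2) hA).symm
    have hxd : g'.val.2.2.2 = x.val.2.2.2 := hD
    -- inverse of g
    have hinv : ggkMul q (g⁻¹).val g.val = ((1, 0, 0, 1) : F × F × F × E) := by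
      rw [← hmulB, inv_mul_cancel, ggk_one_val hmulB hm0]
    have hinv1 : (g⁻¹).val.1 * g.val.1 = 1 := congrArg Prod.fst hinv
    have hinv2 : g.val.1 * (g⁻¹).val.2.1 + g.val.2.1 = 0 := congrArg (fun t => t.2.1) hinv
    have hinv3 : g.val.1 ^ (q+1) * (g⁻¹).val.2.2.1 + g.val.1 * g.val.2.1 ^ q * (g⁻¹).val.2.1
        + g.val.2.2.1 = 0 := congrArg (fun t => t.2.2.1) hinv
    set s4 : E := (g⁻¹).val.2.2.2 with hs4
    set e : E := s4 * x.val.2.2.2 with he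
    have key : (g⁻¹ * x).val = ((1, 0, 0, e) : F × F × F × E) := by
      rw [hmulB]
      show ((g⁻¹).val.1 * x.val.1, x.val.1 * (g⁻¹).val.2.1 + x.val.2.1,
        x.val.1 ^ (q+1) * (g⁻¹).val.2.2.1 + x.val.1 * x.val.2.1 ^ q * (g⁻¹).val.2.1
          + x.val.2.2.1, s4 * x.val.2.2.2) = _
      rw [hxa, hxb, hxc, hinv1, hinv2, hinv3]
    -- the witness element w
    set w : ↥(ggkSet q m ι) := g⁻¹ * g' with hwdef
    have hwmem : w ∈ G := mul_mem (inv_mem hg) hg'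
    have hw4 : w.val.2.2.2 = e := by
      have : w.val = ggkMul q (g⁻¹).val g'.val := hmulB _ _
      have h4 : w.val.2.2.2 = s4 * g'.val.2.2.2 := congrArg (fun t => t.2.2.2) this
      rw [h4, hxd]
    obtain ⟨hw1ne, hw2, hw3⟩ := w.2
    obtain ⟨hs1ne, _, hs3⟩ := (g⁻¹ : ↥(ggkSet q m ι)).2
    obtain ⟨hx1ne, _, hx3⟩ := x.2
    have hem : e ^ m = 1 := by
      rw [he, mul_pow, hs3, hx3, ← map_mul, hxa, hinv1, map_one]
    have hw1 : w.val.1 = 1 := by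
      apply ι.injective
      rw [map_one, ← hw3, hw4, hem]
    have hwval : (w : F × F × F × E) = (1, w.val.2.1, w.val.2.2.1, e) := by
      rw [← hw1, ← hw4]
    -- the exponent
    set K : ℕ := q ^ (2 * n) with hK
    have hpdvdK : p ∣ K := by
      rw [hK, hq, ← pow_mul]
      exact dvd_pow_self p (by positivity)
    have hKcast : (K : F) = 0 := (CharP.cast_eq_zero_iff F p K).2 hpdvdK
    have hKch : ((K.choose 2 : ℕ) : F) = 0 := by
      apply (CharP.cast_eq_zero_iff F p _).2
      rw [hK, hq, ← pow_mul]
      refine Nat.Prime.dvd_choose_pow hp (by norm_num) (fun habs => ?_)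
      have h2 : 2 ≤ h * (2 * n) := by nlinarith
      have hbig : 2 < p ^ (h * (2 * n)) := by
        calc 2 < 2 ^ 2 := by norm_num
        _ ≤ 2 ^ (h * (2 * n)) := Nat.pow_le_pow_right (by norm_num) h2
        _ ≤ p ^ (h * (2 * n)) := Nat.pow_le_pow_left hp.two_le _
      omega
    have heK : e ^ K = e := by
      rw [← hE]
      exact FiniteField.pow_card e
    have hfinal : (w ^ K).val = (g⁻¹ * x).val := by
      rw [ggk_pow_val hmulB hm0 w _ _ _ hwval K, key, hKcast, hKch, heK]
      norm_num
    have hgx : g⁻¹ * x = w ^ K := Subtype.ext hfinal.symm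
    have : x = g * (g⁻¹ * x) := (mul_inv_cancel_left g x).symm
    rw [this, hgx]
    exact mul_mem hg (pow_mem hwmem K)
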